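/- Two atomic hypergraphs H and J are cognate if and only if they have the same set of constructions. -/

import Mathlib

namespace HG

variable {α : Type*} [DecidableEq α]

/-- The carrier of a hypergraph: the union of its members. -/
def carrier (H : Finset (Finset α)) : Finset α := H.sup id

/-- A hypergraph (on its carrier) is a finite family of sets not containing `∅`. -/
def IsHypergraph (H : Finset (Finset α)) : Prop := ∅ ∉ H

/-- The restriction `H_Y = {X ∈ H ∣ X ⊆ Y}`. -/
def restrict (H : Finset (Finset α)) (Y : Finset α) : Finset (Finset α) :=
  H.filter (· ⊆ Y)

/-- `x` and `y` are joined by a path of `H`: a nonempty sequence of distinct members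
of `H`, consecutive members intersecting, the first containing `x`, the last `y`. -/
def Joined (H : Finset (Finset α)) (x y : α) : Prop :=
  ∃ (X : Finset α) (l : List (Finset α)),
    (X :: l).Nodup ∧ (∀ Z ∈ X :: l, Z ∈ H) ∧
    (X :: l).Chain' (fun A B => (A ∩ B).Nonempty) ∧
    x ∈ X ∧ y ∈ (X :: l).getLast (List.cons_ne_nil X l)

/-- Path-connectedness of a hypergraph: any two carrier elements are joined. -/
def Conn (H : Finset (Finset α)) : Prop :=
  ∀ x ∈ carrier H, ∀ y ∈ carrier H, Joined H x y

/-- `P` is a hypergraph partition of `H`: a partition of `H` whose family of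
carriers is a partition of the carrier of `H`. -/
def IsHGPartition (H : Finset (Finset α)) (P : Finset (Finset (Finset α))) : Prop :=
  (∀ Q ∈ P, Q ≠ ∅) ∧
  (∀ Q ∈ P, ∀ Q' ∈ P, Q ≠ Q' → Disjoint Q Q') ∧
  P.sup id = H ∧
  (∀ Q ∈ P, ∀ Q' ∈ P, Q ≠ Q' → Disjoint (carrier Q) (carrier Q'))

/-- A hypergraph is atomic when it contains all singletons of carrier elements. -/
def Atomic (H : Finset (Finset α)) : Prop := ∀ x ∈ carrier H, {x} ∈ H

/-- A hypergraph is saturated when intersecting members have their union in it. -/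
def Saturated (H : Finset (Finset α)) : Prop :=
  ∀ X ∈ H, ∀ Y ∈ H, (X ∩ Y).Nonempty → X ∪ Y ∈ H

/-- `Y` is dispensable in `H` when `(H_Y) \ {Y}` is a connected hypergraph on `Y`. -/
def Dispensable (H : Finset (Finset α)) (Y : Finset α) : Prop :=
  IsHypergraph ((restrict H Y).erase Y) ∧
  carrier ((restrict H Y).erase Y) = Y ∧
  Conn ((restrict H Y).erase Y)

/-- `J` enhances `H` when `J = H ∪ {Y}` for some `Y ∉ H` dispensable in `H`. -/
def Enhances (J H : Finset (Finset α)) : Prop :=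
  ∃ Y, Dispensable H Y ∧ Y ∉ H ∧ J = insert Y H

/-- Cognation: the equivalence closure of the enhancement relation. -/
def Cognate (H J : Finset (Finset α)) : Prop :=
  Relation.EqvGen Enhances H J

/-- The finest hypergraph partition: one all of whose parts are connected. -/
def FinestHGPartition (H : Finset (Finset α)) (P : Finset (Finset (Finset α))) : Prop :=
  IsHGPartition H P ∧ ∀ Q ∈ P, Conn Q

/-- Constructions of a hypergraph, defined recursively. -/
inductive IsConstruction : Finset (Finset α) → Finset (Finset α) → Prop
  | empty : IsConstruction ∅ ∅
  | conn {H K : Finset (Finset α)} {x : α} :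
      (carrier H).Nonempty → Conn H → x ∈ carrier H →
      IsConstruction (restrict H ((carrier H).erase x)) K →
      IsConstruction H (insert (carrier H) K)
  | parts {H : Finset (Finset α)} {P : Finset (Finset (Finset α))}
      {K : Finset (Finset α) → Finset (Finset α)} :
      2 ≤ (carrier H).card → ¬ Conn H → 2 ≤ P.card → FinestHGPartition H P →
      (∀ Q ∈ P, IsConstruction Q (K Q)) →
      IsConstruction H (P.sup K)

/-- An `M`-antichain: at least two members of `M`, pairwise incomparable. -/
def IsAntichainIn (M S : Finset (Finset α)) : Prop :=
  S ⊆ M ∧ 2 ≤ S.card ∧ ∀ X ∈ S, ∀ Y ∈ S, X ≠ Y → ¬ X ⊆ Y ∧ ¬ Y ⊆ X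

/-- `S` misses `H` when the union of `S` is not a member of `H`. -/
def Misses (H S : Finset (Finset α)) : Prop := S.sup id ∉ H

/-- `x` is `X`-superficial relative to `M`. -/
def Superficial (M : Finset (Finset α)) (X : Finset α) (x : α) : Prop :=
  x ∈ X ∧ ∀ Y ∈ M, Y ⊂ X → x ∉ Y

/-- ASC-hypergraph: atomic, saturated and connected hypergraph. -/
def ASC (H : Finset (Finset α)) : Prop :=
  IsHypergraph H ∧ Atomic H ∧ Saturated H ∧ Conn H

end HG

open HG

namespace HG
set_option linter.unusedVariables false
set_option linter.unusedSectionVars false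
variable {α : Type*} [DecidableEq α]
open scoped Classical

lemma mem_carrier {H : Finset (Finset α)} {x : α} :
    x ∈ carrier H ↔ ∃ E ∈ H, x ∈ E := by
  simp [carrier, Finset.mem_sup]

lemma subset_carrier {H : Finset (Finset α)} {E : Finset α} (hE : E ∈ H) : E ⊆ carrier H :=
  fun x hx => mem_carrier.2 ⟨E, hE, hx⟩

lemma carrier_mono {H H' : Finset (Finset α)} (h : H ⊆ H') : carrier H ⊆ carrier H' := by
  intro x hx; obtain ⟨E, hE, hxE⟩ := mem_carrier.1 hx; exact mem_carrier.2 ⟨E, h hE, hxE⟩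

lemma mem_restrict {H : Finset (Finset α)} {S Z : Finset α} :
    Z ∈ restrict H S ↔ Z ∈ H ∧ Z ⊆ S := Finset.mem_filter

lemma restrict_subset (H : Finset (Finset α)) (S : Finset α) : restrict H S ⊆ H :=
  Finset.filter_subset _ _

lemma carrier_restrict_subset (H : Finset (Finset α)) (S : Finset α) :
    carrier (restrict H S) ⊆ S := by
  intro x hx
  obtain ⟨E, hE, hxE⟩ := mem_carrier.1 hx
  exact (mem_restrict.1 hE).2 hxE

lemma restrict_mono {H : Finset (Finset α)} {S T : Finset α} (h : S ⊆ T) :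
    restrict H S ⊆ restrict H T := by
  intro Z hZ; rw [mem_restrict] at *; exact ⟨hZ.1, hZ.2.trans h⟩

lemma restrict_restrict {H : Finset (Finset α)} {S Y : Finset α} (h : Y ⊆ S) :
    restrict (restrict H S) Y = restrict H Y := by
  ext Z; simp only [mem_restrict]
  exact ⟨fun h' => ⟨h'.1.1, h'.2⟩, fun h' => ⟨⟨h'.1, h'.2.trans h⟩, h'.2⟩⟩

lemma restrict_carrier_self (H : Finset (Finset α)) : restrict H (carrier H) = H := by
  ext Z; simp only [mem_restrict]
  exact ⟨fun h => h.1, fun h => ⟨h, subset_carrier h⟩⟩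

lemma hypergraph_restrict {H : Finset (Finset α)} (hH : IsHypergraph H) (S : Finset α) :
    IsHypergraph (restrict H S) := fun h => hH (restrict_subset H S h)

lemma atomic_restrict {H : Finset (Finset α)} (hA : Atomic H) (S : Finset α) :
    Atomic (restrict H S) := by
  intro x hx
  have hxS := carrier_restrict_subset H S hx
  have hxc : x ∈ carrier H := carrier_mono (restrict_subset H S) hx
  exact mem_restrict.2 ⟨hA x hxc, Finset.singleton_subset_iff.2 hxS⟩

lemma carrier_restrict_erase {H : Finset (Finset α)} (hA : Atomic H) {C : Finset α}
    (hC : C ⊆ carrier H) (x : α) :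
    carrier (restrict H (C.erase x)) = C.erase x := by
  apply Finset.Subset.antisymm (carrier_restrict_subset _ _)
  intro y hy
  have hyC : y ∈ carrier H := hC (Finset.mem_of_mem_erase hy)
  exact subset_carrier (mem_restrict.2 ⟨hA y hyC, Finset.singleton_subset_iff.2 hy⟩)
    (Finset.mem_singleton_self y)

/-- adjacency step -/
def Step (H : Finset (Finset α)) (x y : α) : Prop := ∃ E ∈ H, x ∈ E ∧ y ∈ E

/-- reachability -/
def Reach (H : Finset (Finset α)) : α → α → Prop := Relation.ReflTransGen (Step H)

lemma Step.symm' {H : Finset (Finset α)} {x y : α} (h : Step H x y) : Step H y x := by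
  obtain ⟨E, hE, h1, h2⟩ := h; exact ⟨E, hE, h2, h1⟩

lemma reach_symm {H : Finset (Finset α)} {x y : α} (h : Reach H x y) : Reach H y x := by
  induction h with
  | refl => exact Relation.ReflTransGen.refl
  | tail _ hstep ih => exact Relation.ReflTransGen.head hstep.symm' ih

lemma reach_mono {H H' : Finset (Finset α)} (h : H ⊆ H') {x y : α} (hr : Reach H x y) :
    Reach H' x y :=
  Relation.ReflTransGen.mono (r := Step H) (p := Step H') (fun _ _ ⟨E, hE, h1, h2⟩ => ⟨E, h hE, h1, h2⟩) _ _ hr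

lemma reach_of_step_reach {H₁ H₂ : Finset (Finset α)}
    (h : ∀ a b, Step H₁ a b → Reach H₂ a b) {x y : α} (hr : Reach H₁ x y) :
    Reach H₂ x y := by
  induction hr with
  | refl => exact Relation.ReflTransGen.refl
  | tail _ hstep ih => exact ih.trans (h _ _ hstep)
lemma joined_of_step {H : Finset (Finset α)} {x y : α} {E : Finset α}
    (hE : E ∈ H) (hx : x ∈ E) (hy : y ∈ E) : Joined H x y := by
  refine ⟨E, [], by simp, by simp [hE], List.isChain_singleton _, hx, by simpa⟩

lemma joined_tail {H : Finset (Finset α)} {x y z : α}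
    (hj : Joined H x y) (hs : Step H y z) : Joined H x z := by
  obtain ⟨X, l, hnd, hmem, hch, hx, hy⟩ := hj
  obtain ⟨E, hE, hyE, hzE⟩ := hs
  by_cases hEl : E ∈ X :: l
  · -- truncate at E
    obtain ⟨s, t, hst⟩ := List.append_of_mem hEl
    have hpre : (s ++ [E]) <+: (X :: l) := by
      rw [hst]; exact ⟨t, by simp⟩
    -- s ++ [E] = X :: s', where s' is tail
    obtain ⟨s', hs'⟩ : ∃ s', s ++ [E] = X :: s' := by
      cases s with
      | nil =>
          have hXE : X = E := by
            have := congrArg (fun l => l.head?) hst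
            simpa using this
          exact ⟨[], by simp [hXE]⟩
      | cons a s => exact ⟨s ++ [E], by
          have : a = X := by
            have := congrArg (fun l => l.head?) hst
            simpa using this.symm
          simp [this]⟩
    refine ⟨X, s', ?_, ?_, ?_, hx, ?_⟩
    · rw [← hs']; exact hnd.sublist hpre.sublist
    · intro Z hZ; exact hmem Z (hpre.subset (hs' ▸ hZ))
    · rw [← hs']; exact hch.prefix hpre
    · have h1 : (X :: s').getLast? = some E := by
        rw [← hs']; simp
      have h2 := List.getLast?_eq_getLast (List.cons_ne_nil X s')
      rw [h2, Option.some_inj] at h1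
      rw [h1]; exact hzE
  · -- append E
    refine ⟨X, l ++ [E], ?_, ?_, ?_, hx, ?_⟩
    · have : (X :: l) ++ [E] = X :: (l ++ [E]) := by simp
      rw [← this]
      exact List.Nodup.append hnd (List.nodup_singleton E)
        (by intro a ha hb; simp at hb; subst hb; exact hEl ha)
    · intro Z hZ
      rcases List.mem_cons.1 hZ with h | h
      · exact hmem Z (by simp [h])
      · rcases List.mem_append.1 h with h | h
        · exact hmem Z (by simp [h])
        · simp at h; subst h; exact hE
    · have heq : X :: (l ++ [E]) = (X :: l) ++ [E] := by simp
      rw [heq, List.Chain', List.isChain_append]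
      refine ⟨hch, by simp, ?_⟩
      intro a ha b hb
      simp only [List.getLast?_eq_getLast (List.cons_ne_nil X l), Option.mem_def,
        Option.some.injEq] at ha
      simp at hb
      subst hb
      exact ⟨y, Finset.mem_inter.2 ⟨ha ▸ hy, hyE⟩⟩
    · have heq : X :: (l ++ [E]) = (X :: l) ++ [E] := by simp
      have : (X :: (l ++ [E])).getLast (List.cons_ne_nil _ _)
          = ((X :: l) ++ [E]).getLast (by simp) := by congr 1
      rw [this, List.getLast_append]
      exact hzE

lemma joined_of_reach {H : Finset (Finset α)} {x y : α}
    (hx : x ∈ carrier H) (h : Reach H x y) : Joined H x y := by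
  induction h with
  | refl =>
      obtain ⟨E, hE, hxE⟩ := mem_carrier.1 hx
      exact joined_of_step hE hxE hxE
  | tail _ hstep ih => exact joined_tail ih hstep

lemma reach_of_joined {H : Finset (Finset α)} {x y : α} (h : Joined H x y) : Reach H x y := by
  obtain ⟨X, l, -, hmem, hch, hx, hy⟩ := h
  have key : ∀ (l : List (Finset α)) (X : Finset α) (x : α),
      (∀ Z ∈ X :: l, Z ∈ H) → (X :: l).Chain' (fun A B => (A ∩ B).Nonempty) →
      x ∈ X → y ∈ (X :: l).getLast (List.cons_ne_nil X l) → Reach H x y := by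
    intro l
    induction l with
    | nil =>
        intro X x hmem hch hx hy
        simp only [List.getLast_singleton] at hy
        exact Relation.ReflTransGen.single ⟨X, hmem X (by simp), hx, hy⟩
    | cons B l ih =>
        intro X x hmem hch hx hy
        obtain ⟨w, hw⟩ := (List.isChain_cons_cons.1 hch).1
        have h1 : Step H x w := ⟨X, hmem X (by simp), hx, (Finset.mem_inter.1 hw).1⟩
        have h2 : Reach H w y := by
          refine ih B w ?_ (List.isChain_cons_cons.1 hch).2 (Finset.mem_inter.1 hw).2 ?_
          · intro Z hZ; exact hmem Z (List.mem_cons_of_mem X hZ)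
          · simpa using hy
        exact Relation.ReflTransGen.head h1 h2
  exact key l X x hmem hch hx hy

lemma conn_iff_reach {H : Finset (Finset α)} :
    Conn H ↔ ∀ x ∈ carrier H, ∀ y ∈ carrier H, Reach H x y := by
  constructor
  · intro h x hx y hy; exact reach_of_joined (h x hx y hy)
  · intro h x hx y hy; exact joined_of_reach hx (h x hx y hy)
/-- The cognation closure: all nonempty sets whose restriction is a connected
spanning hypergraph. -/
noncomputable def clo (H : Finset (Finset α)) : Finset (Finset α) :=
  (carrier H).powerset.filter
    (fun Y => Y.Nonempty ∧ carrier (restrict H Y) = Y ∧ Conn (restrict H Y))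

lemma mem_clo {H : Finset (Finset α)} {Y : Finset α} :
    Y ∈ clo H ↔ Y.Nonempty ∧ carrier (restrict H Y) = Y ∧ Conn (restrict H Y) := by
  unfold clo
  rw [Finset.mem_filter, Finset.mem_powerset]
  constructor
  · tauto
  · intro h
    refine ⟨?_, h⟩
    rw [← h.2.1]
    exact (carrier_mono (restrict_subset H Y))

lemma subset_clo {H : Finset (Finset α)} (hH : IsHypergraph H) : H ⊆ clo H := by
  intro E hE
  have hne : E.Nonempty := by
    rcases Finset.eq_empty_or_nonempty E with h | h
    · exact absurd (h ▸ hE) hH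
    · exact h
  have hEr : E ∈ restrict H E := mem_restrict.2 ⟨hE, Finset.Subset.refl E⟩
  have hcar : carrier (restrict H E) = E :=
    Finset.Subset.antisymm (carrier_restrict_subset H E) (subset_carrier hEr)
  refine mem_clo.2 ⟨hne, hcar, ?_⟩
  intro x hx y hy
  rw [hcar] at hx hy
  exact joined_of_step hEr hx hy

lemma clo_subset_powerset {H : Finset (Finset α)} {Y : Finset α} (h : Y ∈ clo H) :
    Y ⊆ carrier H := by
  rw [← (mem_clo.1 h).2.1]
  exact carrier_mono (restrict_subset H Y)

lemma clo_nonempty_mem {H : Finset (Finset α)} {Y : Finset α} (h : Y ∈ clo H) : Y.Nonempty :=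
  (mem_clo.1 h).1

lemma carrier_eq_of_clo_eq {H J : Finset (Finset α)} (hH : IsHypergraph H)
    (hJ : IsHypergraph J) (h : clo H = clo J) : carrier H = carrier J := by
  apply Finset.Subset.antisymm
  · intro x hx
    obtain ⟨E, hE, hxE⟩ := mem_carrier.1 hx
    exact clo_subset_powerset (h ▸ subset_clo hH hE) hxE
  · intro x hx
    obtain ⟨E, hE, hxE⟩ := mem_carrier.1 hx
    exact clo_subset_powerset (h ▸ subset_clo hJ hE) hxE

lemma clo_restrict {H : Finset (Finset α)} {S : Finset α} :
    clo (restrict H S) = (clo H).filter (· ⊆ S) := by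
  ext Y
  rw [Finset.mem_filter]
  constructor
  · intro h
    have hYS : Y ⊆ S := (clo_subset_powerset h).trans (carrier_restrict_subset H S)
    rw [mem_clo, restrict_restrict hYS] at h
    exact ⟨mem_clo.2 h, hYS⟩
  · rintro ⟨hY, hYS⟩
    rw [mem_clo] at hY ⊢
    rw [restrict_restrict hYS]
    exact hY

lemma conn_of_carrier_mem_clo {H : Finset (Finset α)} (h : carrier H ∈ clo H) : Conn H := by
  have := (mem_clo.1 h).2.2
  rwa [restrict_carrier_self] at this

lemma carrier_mem_clo {H : Finset (Finset α)} (hne : (carrier H).Nonempty) (hc : Conn H) :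
    carrier H ∈ clo H := by
  refine mem_clo.2 ⟨hne, ?_, ?_⟩ <;> rw [restrict_carrier_self]
  exact hc

lemma reach_of_mem_clo {H : Finset (Finset α)} {Y : Finset α} (h : Y ∈ clo H) {x y : α}
    (hx : x ∈ Y) (hy : y ∈ Y) : Reach H x y := by
  obtain ⟨-, hcar, hconn⟩ := mem_clo.1 h
  rw [← hcar] at hx hy
  have := hconn x hx y hy
  exact reach_mono (restrict_subset H Y) (reach_of_joined this)
/-- component carrier of `x` -/
noncomputable def compCar (H : Finset (Finset α)) (x : α) : Finset α :=
  (carrier H).filter (fun y => Reach H x y)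

lemma mem_compCar {H : Finset (Finset α)} {x y : α} :
    y ∈ compCar H x ↔ y ∈ carrier H ∧ Reach H x y := Finset.mem_filter

lemma self_mem_compCar {H : Finset (Finset α)} {x : α} (hx : x ∈ carrier H) :
    x ∈ compCar H x := mem_compCar.2 ⟨hx, Relation.ReflTransGen.refl⟩

lemma compCar_eq_of_reach {H : Finset (Finset α)} {x y : α} (h : Reach H x y) :
    compCar H x = compCar H y := by
  ext z
  simp only [mem_compCar]
  exact ⟨fun hz => ⟨hz.1, (reach_symm h).trans hz.2⟩, fun hz => ⟨hz.1, h.trans hz.2⟩⟩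

lemma edge_subset_compCar {H : Finset (Finset α)} {E : Finset α} (hE : E ∈ H) {x : α}
    (hx : x ∈ E) : E ⊆ compCar H x := by
  intro y hy
  exact mem_compCar.2 ⟨subset_carrier hE hy, Relation.ReflTransGen.single ⟨E, hE, hx, hy⟩⟩

lemma compCar_subset_carrier (H : Finset (Finset α)) (x : α) :
    compCar H x ⊆ carrier H := Finset.filter_subset _ _

lemma carrier_restrict_compCar {H : Finset (Finset α)} {x : α} :
    carrier (restrict H (compCar H x)) = compCar H x := by
  apply Finset.Subset.antisymm (carrier_restrict_subset _ _)
  intro y hy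
  obtain ⟨E, hE, hyE⟩ := mem_carrier.1 (compCar_subset_carrier H x hy)
  have hEc : E ⊆ compCar H x := by
    rw [compCar_eq_of_reach (mem_compCar.1 hy).2]
    exact edge_subset_compCar hE hyE
  exact subset_carrier (mem_restrict.2 ⟨hE, hEc⟩) hyE

lemma reach_restrict_compCar {H : Finset (Finset α)} {x y z : α}
    (hy : y ∈ compCar H x) (h : Reach H y z) :
    Reach (restrict H (compCar H x)) y z := by
  induction h with
  | refl => exact Relation.ReflTransGen.refl
  | tail hab hstep ih =>
      rename_i b c
      obtain ⟨E, hE, hbE, hcE⟩ := hstep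
      have hb : b ∈ compCar H x := mem_compCar.2
        ⟨subset_carrier hE hbE, (mem_compCar.1 hy).2.trans hab⟩
      have hEc : E ⊆ compCar H x := by
        rw [compCar_eq_of_reach (mem_compCar.1 hb).2]
        exact edge_subset_compCar hE hbE
      exact ih.tail ⟨E, mem_restrict.2 ⟨hE, hEc⟩, hbE, hcE⟩

lemma compCar_mem_clo {H : Finset (Finset α)} {x : α} (hx : x ∈ carrier H) :
    compCar H x ∈ clo H := by
  refine mem_clo.2 ⟨⟨x, self_mem_compCar hx⟩, carrier_restrict_compCar, ?_⟩
  rw [conn_iff_reach]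
  intro a ha b hb
  rw [carrier_restrict_compCar] at ha hb
  exact reach_restrict_compCar ha ((reach_symm (mem_compCar.1 ha).2).trans (mem_compCar.1 hb).2)

/-- the canonical finest partition -/
noncomputable def cparts (H : Finset (Finset α)) : Finset (Finset (Finset α)) :=
  (carrier H).image (fun x => restrict H (compCar H x))

lemma mem_cparts {H : Finset (Finset α)} {Q : Finset (Finset α)} :
    Q ∈ cparts H ↔ ∃ x ∈ carrier H, Q = restrict H (compCar H x) := by
  simp [cparts, eq_comm]

lemma conn_one_point {H : Finset (Finset α)} {x : α} (h : carrier H ⊆ {x}) : Conn H := by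
  intro a ha b hb
  have hax : a = x := Finset.mem_singleton.1 (h ha)
  have hbx : b = x := Finset.mem_singleton.1 (h hb)
  obtain ⟨E, hE, haE⟩ := mem_carrier.1 ha
  exact joined_of_step hE haE (hbx ▸ hax ▸ haE)

lemma two_le_card_carrier_of_not_conn {H : Finset (Finset α)} (h : ¬ Conn H) :
    2 ≤ (carrier H).card := by
  by_contra hc
  push_neg at hc
  interval_cases hcard : (carrier H).card
  · refine h fun a ha => ?_
    rw [Finset.card_eq_zero.1 hcard] at ha
    exact absurd ha (Finset.notMem_empty a)
  · obtain ⟨x, hx⟩ := Finset.card_eq_one.1 hcard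
    exact h (conn_one_point (by rw [hx]))
lemma compCar_disjoint {H : Finset (Finset α)} {x y : α}
    (h : compCar H x ≠ compCar H y) : Disjoint (compCar H x) (compCar H y) := by
  rw [Finset.disjoint_left]
  intro a hax hay
  exact h (by
    rw [compCar_eq_of_reach (mem_compCar.1 hax).2, compCar_eq_of_reach (mem_compCar.1 hay).2])

lemma cparts_finest {H : Finset (Finset α)} (hH : IsHypergraph H) :
    FinestHGPartition H (cparts H) := by
  have hne : ∀ E ∈ H, E.Nonempty := by
    intro E hE
    rcases Finset.eq_empty_or_nonempty E with h | h
    · exact absurd (h ▸ hE) hH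
    · exact h
  have hcarQ : ∀ Q ∈ cparts H, ∃ x ∈ carrier H, Q = restrict H (compCar H x) ∧
      carrier Q = compCar H x := by
    intro Q hQ
    obtain ⟨x, hx, rfl⟩ := mem_cparts.1 hQ
    exact ⟨x, hx, rfl, carrier_restrict_compCar⟩
  refine ⟨⟨?_, ?_, ?_, ?_⟩, ?_⟩
  · -- parts nonempty
    intro Q hQ
    obtain ⟨x, hx, rfl, -⟩ := hcarQ Q hQ
    obtain ⟨E, hE, hxE⟩ := mem_carrier.1 hx
    intro hQe
    have : E ∈ restrict H (compCar H x) := mem_restrict.2 ⟨hE, edge_subset_compCar hE hxE⟩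
    rw [hQe] at this
    exact absurd this (Finset.notMem_empty E)
  · -- parts disjoint
    intro Q hQ Q' hQ' hne'
    obtain ⟨x, hx, rfl, -⟩ := hcarQ Q hQ
    obtain ⟨y, hy, rfl, -⟩ := hcarQ Q' hQ'
    have hcc : compCar H x ≠ compCar H y := fun h => hne' (by rw [h])
    rw [Finset.disjoint_left]
    intro E hE hE'
    have h1 := (mem_restrict.1 hE).2
    have h2 := (mem_restrict.1 hE').2
    obtain ⟨a, ha⟩ := hne E (mem_restrict.1 hE).1
    exact (Finset.disjoint_left.1 (compCar_disjoint hcc)) (h1 ha) (h2 ha)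
  · -- sup = H
    apply Finset.Subset.antisymm
    · intro E hE
      obtain ⟨Q, hQ, hEQ⟩ := Finset.mem_sup.1 hE
      obtain ⟨x, hx, rfl, -⟩ := hcarQ Q hQ
      exact restrict_subset H _ hEQ
    · intro E hE
      obtain ⟨a, ha⟩ := hne E hE
      have hQ : restrict H (compCar H a) ∈ cparts H :=
        mem_cparts.2 ⟨a, subset_carrier hE ha, rfl⟩
      have : E ∈ restrict H (compCar H a) := mem_restrict.2 ⟨hE, edge_subset_compCar hE ha⟩
      exact Finset.le_sup (f := id) hQ this
  · -- carriers disjoint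
    intro Q hQ Q' hQ' hne'
    obtain ⟨x, hx, rfl, hc1⟩ := hcarQ Q hQ
    obtain ⟨y, hy, rfl, hc2⟩ := hcarQ Q' hQ'
    rw [hc1, hc2]
    exact compCar_disjoint (fun h => hne' (by rw [h]))
  · -- parts connected
    intro Q hQ
    obtain ⟨x, hx, rfl, -⟩ := hcarQ Q hQ
    exact (mem_clo.1 (compCar_mem_clo hx)).2.2

lemma two_le_cparts_card {H : Finset (Finset α)} (hH : IsHypergraph H) (hnc : ¬ Conn H) :
    2 ≤ (cparts H).card := by
  rw [conn_iff_reach] at hnc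
  push_neg at hnc
  obtain ⟨x, hx, y, hy, hxy⟩ := hnc
  have hne : restrict H (compCar H x) ≠ restrict H (compCar H y) := by
    intro h
    have : compCar H x = compCar H y := by
      rw [← carrier_restrict_compCar (H := H) (x := x),
        ← carrier_restrict_compCar (H := H) (x := y), h]
    have hyx : y ∈ compCar H x := this ▸ self_mem_compCar hy
    exact hxy (mem_compCar.1 hyx).2
  exact Finset.one_lt_card.2 ⟨_, mem_cparts.2 ⟨x, hx, rfl⟩, _, mem_cparts.2 ⟨y, hy, rfl⟩, hne⟩

lemma compCar_ssubset_of_not_conn {H : Finset (Finset α)} (hnc : ¬ Conn H) {x : α}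
    (hx : x ∈ carrier H) : compCar H x ⊂ carrier H := by
  rw [conn_iff_reach] at hnc
  push_neg at hnc
  obtain ⟨a, ha, b, hb, hab⟩ := hnc
  refine Finset.ssubset_iff_of_subset (compCar_subset_carrier H x) |>.2 ?_
  by_cases hax : a ∈ compCar H x
  · exact ⟨b, hb, fun hbx => hab ((reach_symm (mem_compCar.1 hax).2).trans (mem_compCar.1 hbx).2)⟩
  · exact ⟨a, ha, hax⟩
section PartitionFacts
variable {H : Finset (Finset α)} {P : Finset (Finset (Finset α))}

lemma part_subset (hP : FinestHGPartition H P) {Q : Finset (Finset α)} (hQ : Q ∈ P) : Q ⊆ H := by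
  intro Z hZ
  rw [← hP.1.2.2.1]
  exact Finset.le_sup (f := id) hQ hZ

lemma part_eq_restrict (hH : IsHypergraph H) (hP : FinestHGPartition H P)
    {Q : Finset (Finset α)} (hQ : Q ∈ P) : Q = restrict H (carrier Q) := by
  apply Finset.Subset.antisymm
  · intro Z hZ
    exact mem_restrict.2 ⟨part_subset hP hQ hZ, subset_carrier hZ⟩
  · intro Z hZ
    obtain ⟨hZH, hZc⟩ := mem_restrict.1 hZ
    have : Z ∈ P.sup id := hP.1.2.2.1.symm ▸ hZH
    obtain ⟨Q', hQ', hZQ'⟩ := Finset.mem_sup.1 this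
    by_cases h : Q' = Q
    · exact h ▸ hZQ'
    · exfalso
      have hzne : Z.Nonempty := by
        rcases Finset.eq_empty_or_nonempty Z with he | hne
        · exact absurd (he ▸ hZH) hH
        · exact hne
      obtain ⟨a, ha⟩ := hzne
      exact Finset.disjoint_left.1 (hP.1.2.2.2 Q' hQ' Q hQ h)
        (subset_carrier hZQ' ha) (hZc ha)

lemma part_hypergraph (hH : IsHypergraph H) (hP : FinestHGPartition H P)
    {Q : Finset (Finset α)} (hQ : Q ∈ P) : IsHypergraph Q :=
  fun h => hH (part_subset hP hQ h)

lemma part_atomic (hH : IsHypergraph H) (hA : Atomic H) (hP : FinestHGPartition H P)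
    {Q : Finset (Finset α)} (hQ : Q ∈ P) : Atomic Q := by
  intro x hx
  have hxH : x ∈ carrier H := carrier_mono (part_subset hP hQ) hx
  rw [part_eq_restrict hH hP hQ]
  exact mem_restrict.2 ⟨hA x hxH, Finset.singleton_subset_iff.2 hx⟩

lemma part_carrier_mem_clo (hH : IsHypergraph H) (hP : FinestHGPartition H P)
    {Q : Finset (Finset α)} (hQ : Q ∈ P) : carrier Q ∈ clo H := by
  have hconnQ : Conn Q := hP.2 Q hQ
  have hne : (carrier Q).Nonempty := by
    have hQne : Q ≠ ∅ := hP.1.1 Q hQ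
    obtain ⟨Z, hZ⟩ := Finset.nonempty_iff_ne_empty.2 hQne
    have hzne : Z.Nonempty := by
      rcases Finset.eq_empty_or_nonempty Z with he | h
      · exact absurd (he ▸ part_subset hP hQ hZ) hH
      · exact h
    obtain ⟨a, ha⟩ := hzne
    exact ⟨a, subset_carrier hZ ha⟩
  refine mem_clo.2 ⟨hne, ?_, ?_⟩
  · rw [← part_eq_restrict hH hP hQ]
  · rw [← part_eq_restrict hH hP hQ]
    exact hconnQ

lemma carrier_eq_sup_parts (hP : FinestHGPartition H P) {x : α} (hx : x ∈ carrier H) :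
    ∃ Q ∈ P, x ∈ carrier Q := by
  obtain ⟨E, hE, hxE⟩ := mem_carrier.1 hx
  have : E ∈ P.sup id := hP.1.2.2.1.symm ▸ hE
  obtain ⟨Q, hQ, hEQ⟩ := Finset.mem_sup.1 this
  exact ⟨Q, hQ, subset_carrier hEQ hxE⟩

lemma part_carrier_eq_compCar (hH : IsHypergraph H) (hP : FinestHGPartition H P)
    {Q : Finset (Finset α)} (hQ : Q ∈ P) {x : α} (hx : x ∈ carrier Q) :
    carrier Q = compCar H x := by
  apply Finset.Subset.antisymm
  · intro y hy
    have hr : Reach Q x y := reach_of_joined ((hP.2 Q hQ) x hx y hy)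
    exact mem_compCar.2 ⟨carrier_mono (part_subset hP hQ) hy,
      reach_mono (part_subset hP hQ) hr⟩
  · intro y hy
    have hr := (mem_compCar.1 hy).2
    -- walk from x to y stays in carrier Q
    clear hy
    induction hr with
    | refl => exact hx
    | tail hab hstep ih =>
        rename_i b c
        obtain ⟨E, hE, hbE, hcE⟩ := hstep
        have hb := ih
        have : E ∈ P.sup id := hP.1.2.2.1.symm ▸ hE
        obtain ⟨Q', hQ', hEQ'⟩ := Finset.mem_sup.1 this
        have hQQ' : Q' = Q := by
          by_contra hne
          exact Finset.disjoint_left.1 (hP.1.2.2.2 Q' hQ' Q hQ hne)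
            (subset_carrier hEQ' hbE) hb
        exact subset_carrier (hQQ' ▸ hEQ') hcE

end PartitionFacts
lemma clo_empty : clo (∅ : Finset (Finset α)) = ∅ := by
  ext Y
  rw [mem_clo]
  simp only [Finset.notMem_empty, iff_false, not_and]
  intro hne hcar
  rw [restrict, Finset.filter_empty] at hcar
  rw [carrier, Finset.sup_empty] at hcar
  exact absurd hcar.symm (Finset.nonempty_iff_ne_empty.1 hne)

lemma eq_empty_of_clo_empty {H : Finset (Finset α)} (hH : IsHypergraph H)
    (h : clo H = ∅) : H = ∅ := by
  have := subset_clo hH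
  rw [h] at this
  exact Finset.subset_empty.1 this

theorem construction_transfer {H K : Finset (Finset α)} (hK : IsConstruction H K) :
    ∀ (J : Finset (Finset α)), IsHypergraph H → Atomic H → IsHypergraph J → Atomic J →
      clo H = clo J → IsConstruction J K := by
  induction hK with
  | empty =>
      intro J hH hA hJ hAJ hclo
      rw [eq_empty_of_clo_empty hJ (by rw [← hclo, clo_empty])]
      exact IsConstruction.empty
  | @conn H K x hne hconn hx hrec ih =>
      intro J hH hA hJ hAJ hclo
      have hcar : carrier H = carrier J := carrier_eq_of_clo_eq hH hJ hclo
      have hconnJ : Conn J := by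
        have h1 : carrier H ∈ clo H := carrier_mem_clo hne hconn
        rw [hclo, hcar] at h1
        exact conn_of_carrier_mem_clo h1
      have hrecJ : IsConstruction (restrict J ((carrier J).erase x)) K := by
        refine ih _ (hypergraph_restrict hH _) (atomic_restrict hA _)
          (hypergraph_restrict hJ _) (atomic_restrict hAJ _) ?_
        rw [clo_restrict, clo_restrict, hclo, hcar]
      have := IsConstruction.conn (x := x) (hcar ▸ hne) hconnJ (hcar ▸ hx) hrecJ
      rwa [← hcar] at this
  | @parts H P K h2 hnc hP2 hP hall ih =>
      intro J hH hA hJ hAJ hclo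
      have hcar : carrier H = carrier J := carrier_eq_of_clo_eq hH hJ hclo
      have hcmem : ∀ Q ∈ P, carrier Q ∈ clo J := fun Q hQ =>
        hclo ▸ part_carrier_mem_clo hH hP hQ
      have hcarf : ∀ Q ∈ P, carrier (restrict J (carrier Q)) = carrier Q := fun Q hQ =>
        (mem_clo.1 (hcmem Q hQ)).2.1
      set f : Finset (Finset α) → Finset (Finset α) := fun Q => restrict J (carrier Q) with hf
      have hQeq : ∀ Q ∈ P, restrict H (carrier Q) = Q := fun Q hQ =>
        (part_eq_restrict hH hP hQ).symm
      have hinj : Set.InjOn f P := by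
        intro Q hQ Q' hQ' hfe
        have : carrier Q = carrier Q' := by
          rw [← hcarf Q hQ, ← hcarf Q' hQ']
          show carrier (f Q) = carrier (f Q')
          rw [hfe]
        rw [← hQeq Q hQ, ← hQeq Q' hQ', this]
      set P' : Finset (Finset (Finset α)) := P.image f with hP'
      set K' : Finset (Finset α) → Finset (Finset α) := fun R => K (restrict H (carrier R))
        with hK'
      have hKval : ∀ Q ∈ P, K' (f Q) = K Q := by
        intro Q hQ
        show K (restrict H (carrier (restrict J (carrier Q)))) = K Q
        rw [hcarf Q hQ, hQeq Q hQ]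
      have hsup : P'.sup K' = P.sup K := by
        rw [hP', Finset.sup_image]
        exact Finset.sup_congr rfl (fun Q hQ => hKval Q hQ)
      have hmemP' : ∀ R ∈ P', ∃ Q ∈ P, R = f Q := by
        intro R hR
        obtain ⟨Q, hQ, rfl⟩ := Finset.mem_image.1 hR
        exact ⟨Q, hQ, rfl⟩
      have hfne : ∀ Q ∈ P, Q ≠ ∅ → f Q ≠ ∅ := by
        intro Q hQ hQne hfe
        have h1 : (carrier Q).Nonempty := clo_nonempty_mem (hclo ▸ part_carrier_mem_clo hH hP hQ)
        have : carrier (f Q) = carrier Q := hcarf Q hQ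
        rw [hfe] at this
        rw [carrier, Finset.sup_empty] at this
        obtain ⟨a, ha⟩ := h1
        rw [← this] at ha
        exact absurd ha (Finset.notMem_empty a)
      have hfinJ : FinestHGPartition J P' := by
        refine ⟨⟨?_, ?_, ?_, ?_⟩, ?_⟩
        · intro R hR
          obtain ⟨Q, hQ, rfl⟩ := hmemP' R hR
          exact hfne Q hQ (hP.1.1 Q hQ)
        · intro R hR R' hR' hne'
          obtain ⟨Q, hQ, rfl⟩ := hmemP' R hR
          obtain ⟨Q', hQ', rfl⟩ := hmemP' R' hR'
          have hQQ' : Q ≠ Q' := fun h => hne' (by rw [h])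
          have hdisj := hP.1.2.2.2 Q hQ Q' hQ' hQQ'
          rw [Finset.disjoint_left]
          intro Z hZ hZ'
          have h1 := (mem_restrict.1 hZ).2
          have h2 := (mem_restrict.1 hZ').2
          have hzne : Z.Nonempty := by
            rcases Finset.eq_empty_or_nonempty Z with he | h
            · exact absurd (he ▸ (mem_restrict.1 hZ).1) hJ
            · exact h
          obtain ⟨a, ha⟩ := hzne
          exact Finset.disjoint_left.1 hdisj (h1 ha) (h2 ha)
        · apply Finset.Subset.antisymm
          · intro Z hZ
            obtain ⟨R, hR, hZR⟩ := Finset.mem_sup.1 hZ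
            obtain ⟨Q, hQ, rfl⟩ := hmemP' R hR
            exact restrict_subset J _ hZR
          · intro Z hZ
            have hZclo : Z ∈ clo H := hclo ▸ subset_clo hJ hZ
            have hzne : Z.Nonempty := by
              rcases Finset.eq_empty_or_nonempty Z with he | h
              · exact absurd (he ▸ hZ) hJ
              · exact h
            obtain ⟨a, ha⟩ := hzne
            have haH : a ∈ carrier H := clo_subset_powerset hZclo ha
            obtain ⟨Q, hQ, haQ⟩ := carrier_eq_sup_parts hP haH
            have hcc : carrier Q = compCar H a := part_carrier_eq_compCar hH hP hQ haQ
            have hZc : Z ⊆ carrier Q := by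
              rw [hcc]
              intro z hz
              exact mem_compCar.2 ⟨clo_subset_powerset hZclo hz,
                reach_of_mem_clo hZclo ha hz⟩
            have : Z ∈ f Q := mem_restrict.2 ⟨hZ, hZc⟩
            exact Finset.le_sup (f := id) (Finset.mem_image_of_mem f hQ) this
        · intro R hR R' hR' hne'
          obtain ⟨Q, hQ, rfl⟩ := hmemP' R hR
          obtain ⟨Q', hQ', rfl⟩ := hmemP' R' hR'
          have hQQ' : Q ≠ Q' := fun h => hne' (by rw [h])
          rw [hcarf Q hQ, hcarf Q' hQ']
          exact hP.1.2.2.2 Q hQ Q' hQ' hQQ'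
        · intro R hR
          obtain ⟨Q, hQ, rfl⟩ := hmemP' R hR
          exact (mem_clo.1 (hcmem Q hQ)).2.2
      have hconstrR : ∀ R ∈ P', IsConstruction R (K' R) := by
        intro R hR
        obtain ⟨Q, hQ, rfl⟩ := hmemP' R hR
        rw [hKval Q hQ]
        refine ih Q hQ (f Q) (part_hypergraph hH hP hQ) (part_atomic hH hA hP hQ)
          (hypergraph_restrict hJ _) (atomic_restrict hAJ _) ?_
        have e1 : clo Q = (clo H).filter (· ⊆ carrier Q) := by
          conv_lhs => rw [← hQeq Q hQ]
          rw [clo_restrict]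
        rw [e1, hclo, hf, clo_restrict]
      have hncJ : ¬ Conn J := by
        intro hc
        apply hnc
        have hneJ : (carrier J).Nonempty := by
          rw [← hcar]
          exact Finset.card_pos.1 (lt_of_lt_of_le (by norm_num) h2)
        have h1 := carrier_mem_clo hneJ hc
        rw [← hclo, ← hcar] at h1
        exact conn_of_carrier_mem_clo h1
      have hP'2 : 2 ≤ P'.card := by
        rw [hP', Finset.card_image_of_injOn hinj]
        exact hP2
      have := IsConstruction.parts (hcar ▸ h2) hncJ hP'2 hfinJ hconstrR
      rwa [hsup] at this
theorem mem_clo_of_mem_construction {H K : Finset (Finset α)} (hK : IsConstruction H K) :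
    IsHypergraph H → Atomic H → ∀ Y ∈ K, Y ∈ clo H := by
  induction hK with
  | empty => intro _ _ Y hY; exact absurd hY (Finset.notMem_empty Y)
  | @conn H K x hne hconn hx hrec ih =>
      intro hH hA Y hY
      rcases Finset.mem_insert.1 hY with h | h
      · exact h ▸ carrier_mem_clo hne hconn
      · have := ih (hypergraph_restrict hH _) (atomic_restrict hA _) Y h
        rw [clo_restrict, Finset.mem_filter] at this
        exact this.1
  | @parts H P K h2 hnc hP2 hP hall ih =>
      intro hH hA Y hY
      obtain ⟨Q, hQ, hYQ⟩ := Finset.mem_sup.1 hY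
      have := ih Q hQ (part_hypergraph hH hP hQ) (part_atomic hH hA hP hQ) Y hYQ
      have e1 : clo Q = (clo H).filter (· ⊆ carrier Q) := by
        conv_lhs => rw [part_eq_restrict hH hP hQ]
        rw [clo_restrict]
      rw [e1, Finset.mem_filter] at this
      exact this.1

/-- every atomic hypergraph has a construction -/
theorem construction_exists :
    ∀ (n : ℕ) (H : Finset (Finset α)), (carrier H).card = n → IsHypergraph H → Atomic H →
      ∃ K, IsConstruction H K := by
  intro n
  induction n using Nat.strong_induction_on with
  | _ n ihn =>
  intro H hn hH hA
  rcases Finset.eq_empty_or_nonempty (carrier H) with hce | hcne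
  · have : H = ∅ := by
      rcases Finset.eq_empty_or_nonempty H with h | ⟨E, hE⟩
      · exact h
      · exfalso
        have hEne : E.Nonempty := by
          rcases Finset.eq_empty_or_nonempty E with h | h
          · exact absurd (h ▸ hE) hH
          · exact h
        obtain ⟨a, ha⟩ := hEne
        have := subset_carrier hE ha
        rw [hce] at this
        exact absurd this (Finset.notMem_empty a)
    exact ⟨∅, this ▸ IsConstruction.empty⟩
  · by_cases hc : Conn H
    · obtain ⟨x, hx⟩ := hcne
      have hcar' : carrier (restrict H ((carrier H).erase x)) = (carrier H).erase x :=
        carrier_restrict_erase hA (Finset.Subset.refl _) x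
      have hlt : (carrier (restrict H ((carrier H).erase x))).card < n := by
        rw [hcar', ← hn]
        exact Finset.card_erase_lt_of_mem hx
      obtain ⟨K, hK⟩ := ihn _ hlt (restrict H ((carrier H).erase x)) rfl
        (hypergraph_restrict hH _) (atomic_restrict hA _)
      exact ⟨_, IsConstruction.conn ⟨x, hx⟩ hc hx hK⟩
    · -- disconnected: use cparts
      have hfin := cparts_finest hH
      have hcard2 := two_le_cparts_card hH hc
      set Kf : Finset (Finset α) → Finset (Finset α) :=
        fun R => if h : ∃ c, IsConstruction R c then h.choose else ∅ with hKf
      have hKfspec : ∀ R ∈ cparts H, IsConstruction R (Kf R) := by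
        intro R hR
        obtain ⟨x, hx, rfl⟩ := mem_cparts.1 hR
        have hltc : (carrier (restrict H (compCar H x))).card < n := by
          rw [carrier_restrict_compCar, ← hn]
          exact Finset.card_lt_card (compCar_ssubset_of_not_conn hc hx)
        obtain ⟨c, hcc⟩ := ihn _ hltc (restrict H (compCar H x)) rfl
          (hypergraph_restrict hH _) (atomic_restrict hA _)
        have hex : ∃ c, IsConstruction (restrict H (compCar H x)) c := ⟨c, hcc⟩
        rw [hKf]
        simp only [hex, dif_pos]
        exact hex.choose_spec
      exact ⟨_, IsConstruction.parts (two_le_card_carrier_of_not_conn hc) hc hcard2 hfin hKfspec⟩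
theorem construction_mem_exists :
    ∀ (n : ℕ) (H : Finset (Finset α)), (carrier H).card = n → IsHypergraph H → Atomic H →
      ∀ Y ∈ clo H, ∃ K, IsConstruction H K ∧ Y ∈ K := by
  intro n
  induction n using Nat.strong_induction_on with
  | _ n ihn =>
  intro H hn hH hA Y hY
  have hYsub : Y ⊆ carrier H := clo_subset_powerset hY
  have hYne : Y.Nonempty := clo_nonempty_mem hY
  have hcne : (carrier H).Nonempty := by
    obtain ⟨a, ha⟩ := hYne
    exact ⟨a, hYsub ha⟩
  by_cases hc : Conn H
  · by_cases hYc : Y = carrier H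
    · obtain ⟨x, hx⟩ := hcne
      obtain ⟨K, hK⟩ := construction_exists (carrier (restrict H ((carrier H).erase x))).card
        _ rfl (hypergraph_restrict hH _) (atomic_restrict hA _)
      exact ⟨_, IsConstruction.conn ⟨x, hx⟩ hc hx hK, hYc ▸ Finset.mem_insert_self _ _⟩
    · obtain ⟨x, hx, hxY⟩ := Finset.exists_of_ssubset (lt_of_le_of_ne hYsub hYc)
      have hYe : Y ⊆ (carrier H).erase x := fun a ha =>
        Finset.mem_erase.2 ⟨fun h => hxY (h ▸ ha), hYsub ha⟩
      have hY' : Y ∈ clo (restrict H ((carrier H).erase x)) := by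
        rw [clo_restrict, Finset.mem_filter]
        exact ⟨hY, hYe⟩
      have hcar' : carrier (restrict H ((carrier H).erase x)) = (carrier H).erase x :=
        carrier_restrict_erase hA (Finset.Subset.refl _) x
      have hlt : (carrier (restrict H ((carrier H).erase x))).card < n := by
        rw [hcar', ← hn]
        exact Finset.card_erase_lt_of_mem hx
      obtain ⟨K, hK, hYK⟩ := ihn _ hlt _ rfl (hypergraph_restrict hH _)
        (atomic_restrict hA _) Y hY'
      exact ⟨_, IsConstruction.conn hcne hc hx hK, Finset.mem_insert_of_mem hYK⟩
  · obtain ⟨y, hyY⟩ := hYne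
    have hyH : y ∈ carrier H := hYsub hyY
    have hYcc : Y ⊆ compCar H y := fun z hz =>
      mem_compCar.2 ⟨hYsub hz, reach_of_mem_clo hY hyY hz⟩
    have hYQ : Y ∈ clo (restrict H (compCar H y)) := by
      rw [clo_restrict, Finset.mem_filter]
      exact ⟨hY, hYcc⟩
    have hltc : (carrier (restrict H (compCar H y))).card < n := by
      rw [carrier_restrict_compCar, ← hn]
      exact Finset.card_lt_card (compCar_ssubset_of_not_conn hc hyH)
    obtain ⟨KQ, hKQ, hYKQ⟩ := ihn _ hltc _ rfl (hypergraph_restrict hH _)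
      (atomic_restrict hA _) Y hYQ
    set Kf : Finset (Finset α) → Finset (Finset α) :=
      fun R => if h : ∃ c, IsConstruction R c ∧ Y ∈ c then h.choose
        else (if h2 : ∃ c, IsConstruction R c then h2.choose else ∅) with hKf
    have hKfspec : ∀ R ∈ cparts H, IsConstruction R (Kf R) := by
      intro R hR
      rw [hKf]
      by_cases h : ∃ c, IsConstruction R c ∧ Y ∈ c
      · simp only [h, dif_pos]
        exact h.choose_spec.1
      · simp only [h, dif_neg, not_false_iff]
        obtain ⟨x, hx, rfl⟩ := mem_cparts.1 hR
        obtain ⟨c, hcc⟩ := construction_exists (carrier (restrict H (compCar H x))).card _ rfl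
          (hypergraph_restrict hH _) (atomic_restrict hA _)
        have h2 : ∃ c, IsConstruction (restrict H (compCar H x)) c := ⟨c, hcc⟩
        simp only [h2, dif_pos]
        exact h2.choose_spec
    have hQmem : restrict H (compCar H y) ∈ cparts H := mem_cparts.2 ⟨y, hyH, rfl⟩
    have hYin : Y ∈ Kf (restrict H (compCar H y)) := by
      rw [hKf]
      have h : ∃ c, IsConstruction (restrict H (compCar H y)) c ∧ Y ∈ c := ⟨KQ, hKQ, hYKQ⟩
      simp only [h, dif_pos]
      exact h.choose_spec.2
    refine ⟨_, IsConstruction.parts (two_le_card_carrier_of_not_conn hc) hc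
      (two_le_cparts_card hH hc) (cparts_finest hH) hKfspec, ?_⟩
    exact Finset.le_sup (f := Kf) hQmem hYin
lemma mem_restrict_insert {H : Finset (Finset α)} {Y Z E : Finset α} :
    E ∈ restrict (insert Y H) Z ↔ (E = Y ∨ E ∈ H) ∧ E ⊆ Z := by
  rw [mem_restrict, Finset.mem_insert]

lemma clo_insert_of_dispensable {H : Finset (Finset α)} {Y : Finset α}
    (hd : Dispensable H Y) (hYH : Y ∉ H) : clo (insert Y H) = clo H := by
  obtain ⟨hDh, hDcar, hDconn⟩ := hd
  set D := (restrict H Y).erase Y with hD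
  have hDsub : ∀ Z, Y ⊆ Z → D ⊆ restrict H Z := by
    intro Z hYZ E hE
    have h1 : E ∈ restrict H Y := Finset.mem_of_mem_erase hE
    exact mem_restrict.2 ⟨(mem_restrict.1 h1).1, (mem_restrict.1 h1).2.trans hYZ⟩
  have hcarA : ∀ Z, carrier (restrict (insert Y H) Z) = carrier (restrict H Z) := by
    intro Z
    apply Finset.Subset.antisymm
    · intro a ha
      obtain ⟨E, hE, haE⟩ := mem_carrier.1 ha
      obtain ⟨hEY, hEZ⟩ := mem_restrict_insert.1 hE
      rcases hEY with rfl | hEH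
      · have : a ∈ carrier D := hDcar ▸ haE
        obtain ⟨e, he, hae⟩ := mem_carrier.1 this
        exact mem_carrier.2 ⟨e, hDsub Z hEZ he, hae⟩
      · exact mem_carrier.2 ⟨E, mem_restrict.2 ⟨hEH, hEZ⟩, haE⟩
    · exact carrier_mono (fun E hE =>
        mem_restrict_insert.2 ⟨Or.inr (mem_restrict.1 hE).1, (mem_restrict.1 hE).2⟩)
  have hconnB : ∀ Z, Conn (restrict (insert Y H) Z) ↔ Conn (restrict H Z) := by
    intro Z
    rw [conn_iff_reach, conn_iff_reach, hcarA Z]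
    constructor
    · intro h a ha b hb
      refine reach_of_step_reach ?_ (h a ha b hb)
      intro u v hs
      obtain ⟨E, hE, huE, hvE⟩ := hs
      obtain ⟨hEY, hEZ⟩ := mem_restrict_insert.1 hE
      rcases hEY with rfl | hEH
      · have hu : u ∈ carrier D := hDcar ▸ huE
        have hv : v ∈ carrier D := hDcar ▸ hvE
        exact reach_mono (hDsub Z hEZ) (reach_of_joined (hDconn u hu v hv))
      · exact Relation.ReflTransGen.single ⟨E, mem_restrict.2 ⟨hEH, hEZ⟩, huE, hvE⟩
    · intro h a ha b hb
      exact reach_mono (fun E hE =>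
        mem_restrict_insert.2 ⟨Or.inr (mem_restrict.1 hE).1, (mem_restrict.1 hE).2⟩)
        (h a ha b hb)
  ext Z
  rw [mem_clo, mem_clo, hcarA Z, hconnB Z]

lemma cognate_clo_aux :
    ∀ (n : ℕ) (H : Finset (Finset α)), ((clo H) \ H).card = n → IsHypergraph H →
      Relation.EqvGen Enhances H (clo H) := by
  intro n
  induction n using Nat.strong_induction_on with
  | _ n ihn =>
  intro H hn hH
  rcases Finset.eq_empty_or_nonempty ((clo H) \ H) with hde | ⟨Y, hY⟩
  · have : clo H = H := Finset.Subset.antisymm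
      (fun E hE => by
        by_contra hne
        have : E ∈ (clo H) \ H := Finset.mem_sdiff.2 ⟨hE, hne⟩
        rw [hde] at this
        exact absurd this (Finset.notMem_empty E))
      (subset_clo hH)
    rw [this]
    exact Relation.EqvGen.refl H
  · obtain ⟨hYclo, hYH⟩ := Finset.mem_sdiff.1 hY
    have hYr : Y ∉ restrict H Y := fun h => hYH (restrict_subset H Y h)
    have hErase : (restrict H Y).erase Y = restrict H Y := Finset.erase_eq_of_notMem hYr
    have hdisp : Dispensable H Y := by
      refine ⟨?_, ?_, ?_⟩ <;> rw [hErase]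
      · exact hypergraph_restrict hH Y
      · exact (mem_clo.1 hYclo).2.1
      · exact (mem_clo.1 hYclo).2.2
    have henh : Enhances (insert Y H) H := ⟨Y, hdisp, hYH, rfl⟩
    have hins : IsHypergraph (insert Y H) := by
      intro h
      rcases Finset.mem_insert.1 h with h | h
      · obtain ⟨a, ha⟩ := clo_nonempty_mem hYclo
        rw [← h] at ha
        exact absurd ha (Finset.notMem_empty a)
      · exact hH h
    have hcloeq : clo (insert Y H) = clo H := clo_insert_of_dispensable hdisp hYH
    have hdiffeq : (clo (insert Y H)) \ (insert Y H) = ((clo H) \ H).erase Y := by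
      rw [hcloeq]
      ext E
      rw [Finset.mem_sdiff, Finset.mem_erase, Finset.mem_sdiff, Finset.mem_insert]
      tauto
    have hlt : ((clo (insert Y H)) \ (insert Y H)).card < n := by
      rw [hdiffeq, ← hn]
      exact Finset.card_erase_lt_of_mem hY
    have hrest := ihn _ hlt (insert Y H) rfl hins
    rw [hcloeq] at hrest
    exact Relation.EqvGen.trans _ _ _
      (Relation.EqvGen.symm _ _ (Relation.EqvGen.rel _ _ henh)) hrest
lemma clo_eq_of_cognate {H J : Finset (Finset α)} (h : Relation.EqvGen Enhances H J) :
    clo H = clo J := by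
  induction h with
  | rel a b hab =>
      obtain ⟨Y, hd, hYb, rfl⟩ := hab
      exact clo_insert_of_dispensable hd hYb
  | refl a => rfl
  | symm a b _ ih => exact ih.symm
  | trans a b c _ _ ih1 ih2 => exact ih1.trans ih2

end HG

theorem cognate_iff_same_constructions
    {α : Type*} [DecidableEq α]
    (H J : Finset (Finset α)) (hH : IsHypergraph H) (hJ : IsHypergraph J)
    (hAH : Atomic H) (hAJ : Atomic J) :
    Cognate H J ↔ ∀ K, IsConstruction H K ↔ IsConstruction J K := by
  constructor
  · intro hcog
    have hcloeq : clo H = clo J := clo_eq_of_cognate hcog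
    intro K
    constructor
    · intro hk; exact construction_transfer hk J hH hAH hJ hAJ hcloeq
    · intro hk; exact construction_transfer hk H hJ hAJ hH hAH hcloeq.symm
  · intro hsame
    have hcloeq : clo H = clo J := by
      ext Y
      constructor
      · intro hY
        obtain ⟨K, hK, hYK⟩ := construction_mem_exists (carrier H).card H rfl hH hAH Y hY
        exact mem_clo_of_mem_construction ((hsame K).1 hK) hJ hAJ Y hYK
      · intro hY
        obtain ⟨K, hK, hYK⟩ := construction_mem_exists (carrier J).card J rfl hJ hAJ Y hY
        exact mem_clo_of_mem_construction ((hsame K).2 hK) hH hAH Y hYK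
    have h1 : Relation.EqvGen Enhances H (clo H) :=
      cognate_clo_aux ((clo H) \ H).card H rfl hH
    have h2 : Relation.EqvGen Enhances J (clo J) :=
      cognate_clo_aux ((clo J) \ J).card J rfl hJ
    exact Relation.EqvGen.trans _ _ _ h1 (hcloeq ▸ Relation.EqvGen.symm _ _ h2)
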